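/- There is a constant C such that for every integer d ≥ 3, d/φ(d) ≤ C·log(log d), where φ is Euler's totient function and log is the natural logarithm. -/

import Mathlib

open Finset Real



-- telescoping

lemma RS.tele (φ : ℕ → ℝ) (a b : ℕ) (h : a ≤ b) :
    ∑ n ∈ Finset.Ico a b, (φ (n+1) - φ n) = φ b - φ a := by
  induction b, h using Nat.le_induction with
  | base => simp
  | succ b hb ih => rw [Finset.sum_Ico_succ_top hb, ih]; ring

-- Abel summation identity

lemma RS.abel (f g : ℕ → ℝ) (N : ℕ) :
    ∑ n ∈ Finset.range (N+1), f n * g n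
      = (∑ k ∈ Finset.range (N+1), f k) * g N
        + ∑ n ∈ Finset.range N, (∑ k ∈ Finset.range (n+1), f k) * (g n - g (n+1)) := by
  induction N with
  | zero => simp
  | succ N ih =>
      rw [Finset.sum_range_succ (fun n => f n * g n), ih, Finset.sum_range_succ (fun n => _ * (g n - g (n+1)))]
      rw [show N+1+1 = (N+1)+1 from rfl, Finset.sum_range_succ f (N+1), Finset.sum_range_succ f N]
      ring

-- log x ≥ 1 - 1/x

lemma RS.one_sub_inv_le_log {x : ℝ} (hx : 0 < x) : 1 - 1/x ≤ Real.log x := by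
  have h := Real.log_le_sub_one_of_pos (show (0:ℝ) < 1/x by positivity)
  rw [Real.log_div one_ne_zero (ne_of_gt hx), Real.log_one] at h
  linarith

-- log n! = sum over prime factors

lemma RS.log_eq_sum (n : ℕ) (hn : n ≠ 0) :
    Real.log n = ∑ p ∈ n.primeFactors, (n.factorization p : ℝ) * Real.log p := by
  conv_lhs => rw [← Nat.factorization_prod_pow_eq_self hn]
  rw [Finsupp.prod, Nat.support_factorization]
  push_cast
  rw [Real.log_prod]
  · exact Finset.sum_congr rfl fun p hp => by
      rw [Real.log_pow]
  · intro p hp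
    have := Nat.pos_of_mem_primeFactors hp
    positivity



-- theta(y) <= y log 4

lemma RS.theta_le (y : ℕ) :
    ∑ p ∈ (Finset.range (y+1)).filter Nat.Prime, Real.log p ≤ y * Real.log 4 := by
  have h4 : (primorial y : ℝ) ≤ ((4:ℕ) ^ y : ℕ) := by
    exact_mod_cast primorial_le_4_pow y
  have hpos : ∀ p ∈ (Finset.range (y+1)).filter Nat.Prime, (p:ℝ) ≠ 0 := by
    intro p hp
    have h := (Finset.mem_filter.mp hp).2.pos
    exact_mod_cast h.ne'
  have := Real.log_le_log (by exact_mod_cast primorial_pos y) h4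
  rw [primorial] at this
  push_cast at this
  rw [Real.log_prod hpos, Real.log_pow] at this
  simpa using this

lemma RS.pow_div_dvd_factorial {p y : ℕ} (hp : p.Prime) : p ^ (y / p) ∣ Nat.factorial y := by
  rcases lt_or_ge y p with h | h
  · simp [Nat.div_eq_of_lt h]
  · rw [Nat.Prime.pow_dvd_factorial_iff hp (Nat.lt_succ_self _)]
    calc y / p = y / p ^ 1 := by rw [pow_one]
    _ ≤ ∑ i ∈ Finset.Ico 1 (Nat.log p y + 1), y / p ^ i := by
        apply Finset.single_le_sum (f := fun i => y / p ^ i) (fun i _ => Nat.zero_le _)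
        rw [Finset.mem_Ico]
        refine ⟨le_refl _, Nat.lt_succ_of_le ?_⟩
        exact Nat.one_le_iff_ne_zero.mpr (Nat.log_pos hp.one_lt h).ne'

lemma RS.M1 (y : ℕ) :
    ∑ p ∈ (Finset.range (y+1)).filter Nat.Prime, Real.log p / p ≤ Real.log y + Real.log 4 := by
  rcases Nat.lt_or_ge y 1 with hy | hy
  · interval_cases y
    simp [Real.log_nonneg, show ((4:ℝ)) = 4 by norm_num]
    positivity
  have hy0 : (0:ℝ) < y := by exact_mod_cast hy
  set S := (Finset.range (y+1)).filter Nat.Prime with hS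
  -- termwise bound
  have key : ∀ p ∈ S, (y:ℝ) * (Real.log p / p) ≤ ((y/p : ℕ) : ℝ) * Real.log p + Real.log p := by
    intro p hp
    obtain ⟨_, hpr⟩ := Finset.mem_filter.mp hp
    have hppos : (0:ℝ) < p := by exact_mod_cast hpr.pos
    have hlog : 0 ≤ Real.log p := Real.log_natCast_nonneg p
    have h1 : y < p * (y/p) + p := by
      have h2 := Nat.div_add_mod y p
      have h3 := Nat.mod_lt y hpr.pos
      omega
    have h1' : (y:ℝ) < (p:ℝ) * ((y/p : ℕ):ℝ) + p := by exact_mod_cast h1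
    have h4 : (y:ℝ) / p ≤ ((y/p : ℕ):ℝ) + 1 := by
      rw [div_le_iff₀ hppos]; nlinarith
    calc (y:ℝ) * (Real.log p / p) = ((y:ℝ)/p) * Real.log p := by ring
    _ ≤ (((y/p : ℕ):ℝ) + 1) * Real.log p := by apply mul_le_mul_of_nonneg_right h4 hlog
    _ = ((y/p : ℕ) : ℝ) * Real.log p + Real.log p := by ring
  -- Legendre comparison
  have leg1 : ∑ p ∈ S, ((y/p : ℕ) : ℝ) * Real.log p
      ≤ ∑ p ∈ S, ((Nat.factorial y).factorization p : ℝ) * Real.log p := by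
    apply Finset.sum_le_sum
    intro p hp
    obtain ⟨_, hpr⟩ := Finset.mem_filter.mp hp
    have hd : (y/p : ℕ) ≤ (Nat.factorial y).factorization p :=
      (Nat.Prime.pow_dvd_iff_le_factorization hpr (Nat.factorial_ne_zero y)).mp
        (RS.pow_div_dvd_factorial hpr)
    exact mul_le_mul_of_nonneg_right (by exact_mod_cast hd) (Real.log_natCast_nonneg p)
  have leg2 : ∑ p ∈ S, ((Nat.factorial y).factorization p : ℝ) * Real.log p
      ≤ Real.log (Nat.factorial y) := by
    rw [RS.log_eq_sum _ (Nat.factorial_ne_zero y)]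
    apply Finset.sum_le_sum_of_subset_of_nonneg
    · intro p hp
      obtain ⟨hmem, hpr⟩ := Finset.mem_filter.mp hp
      exact Nat.mem_primeFactors.mpr ⟨hpr,
        Nat.dvd_factorial hpr.pos (Nat.lt_succ_iff.mp (Finset.mem_range.mp hmem)),
        Nat.factorial_ne_zero y⟩
    · intro p _ _
      have h0 : 0 ≤ Real.log p := Real.log_natCast_nonneg p
      positivity
  have leg := leg1.trans leg2
  have fact_le : Real.log (Nat.factorial y) ≤ (y:ℝ) * Real.log y := by
    have h := Nat.factorial_le_pow y
    have := Real.log_le_log (by exact_mod_cast (Nat.factorial_pos y)) (by exact_mod_cast h : ((Nat.factorial y : ℕ):ℝ) ≤ ((y^y : ℕ):ℝ))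
    rwa [Nat.cast_pow, Real.log_pow] at this
  have theta := RS.theta_le y
  have main : (y:ℝ) * ∑ p ∈ S, Real.log p / p ≤ (y:ℝ) * (Real.log y + Real.log 4) := by
    rw [Finset.mul_sum]
    calc ∑ p ∈ S, (y:ℝ) * (Real.log p / p)
        ≤ ∑ p ∈ S, (((y/p : ℕ) : ℝ) * Real.log p + Real.log p) := Finset.sum_le_sum key
      _ = (∑ p ∈ S, ((y/p : ℕ) : ℝ) * Real.log p) + ∑ p ∈ S, Real.log p := Finset.sum_add_distrib
      _ ≤ (y:ℝ) * Real.log y + (y:ℝ) * Real.log 4 := add_le_add (leg.trans fact_le) theta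
      _ = (y:ℝ) * (Real.log y + Real.log 4) := by ring
  exact le_of_mul_le_mul_left main hy0

lemma RS.log4 : Real.log 4 = 2 * Real.log 2 := by
  rw [show (4:ℝ) = 2^2 by norm_num, Real.log_pow]; push_cast; ring

lemma RS.M2 (y : ℕ) (hy : 2 ≤ y) :
    ∑ p ∈ (Finset.range (y+1)).filter Nat.Prime, ((p:ℝ))⁻¹
      ≤ Real.log (Real.log y) + 6 := by
  classical
  set f : ℕ → ℝ := fun n => if n.Prime then Real.log n / n else 0 with hf
  set g : ℕ → ℝ := fun n => (Real.log n)⁻¹ with hg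
  set F : ℕ → ℝ := fun n => ∑ k ∈ Finset.range (n+1), f k with hFdef
  have hlog2 : (0:ℝ) < Real.log 2 := Real.log_pos (by norm_num)
  have hlog2' : (1:ℝ)/2 < Real.log 2 := by
    have := Real.log_two_gt_d9; linarith
  have hlog4 : (0:ℝ) ≤ Real.log 4 := by rw [RS.log4]; positivity
  -- F bounds
  have hF0 : ∀ n, 0 ≤ F n := by
    intro n
    apply Finset.sum_nonneg
    intro k _
    simp only [hf]
    split
    · have : 0 ≤ Real.log k := Real.log_natCast_nonneg k
      positivity
    · exact le_refl 0
  have hFle : ∀ n : ℕ, F n ≤ Real.log n + Real.log 4 := by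
    intro n
    have : F n = ∑ p ∈ (Finset.range (n+1)).filter Nat.Prime, Real.log p / p := by
      rw [hFdef, Finset.sum_filter]
    rw [this]
    exact RS.M1 n
  have hF1 : F 1 = 0 := by
    rw [hFdef]
    simp [hf, Finset.sum_range_succ, Nat.not_prime_zero, Nat.not_prime_one]
  -- rewrite target sum via f * g
  have hsum : ∑ p ∈ (Finset.range (y+1)).filter Nat.Prime, ((p:ℝ))⁻¹
      = ∑ n ∈ Finset.range (y+1), f n * g n := by
    rw [Finset.sum_filter]
    apply Finset.sum_congr rfl
    intro n _
    by_cases hp : n.Prime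
    · have h2 : (2:ℕ) ≤ n := hp.two_le
      have hlogn : (0:ℝ) < Real.log n := by
        apply Real.log_pos; exact_mod_cast Nat.lt_of_lt_of_le one_lt_two h2
      have hn0 : (0:ℝ) < n := by exact_mod_cast hp.pos
      simp only [hf, hg, if_pos hp]
      field_simp
    · simp [hf, hg, if_neg hp]
  rw [hsum, RS.abel f g y]
  -- φ for telescoping
  set φ : ℕ → ℝ := fun n => Real.log (Real.log n) - Real.log 4 * (Real.log n)⁻¹ with hφ
  have hlogy : Real.log 2 ≤ Real.log y := by
    apply Real.log_le_log (by norm_num)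
    exact_mod_cast hy
  have hlogy0 : (0:ℝ) < Real.log y := lt_of_lt_of_le hlog2 hlogy
  -- first term
  have hfirst : (∑ k ∈ Finset.range (y+1), f k) * g y ≤ 3 := by
    have h1 : (∑ k ∈ Finset.range (y+1), f k) * g y ≤ (Real.log y + Real.log 4) * (Real.log y)⁻¹ := by
      apply mul_le_mul_of_nonneg_right (hFle y)
      rw [hg]
      positivity
    have h2 : (Real.log y + Real.log 4) * (Real.log y)⁻¹ = 1 + Real.log 4 / Real.log y := by
      field_simp
    have h3 : Real.log 4 / Real.log y ≤ Real.log 4 / Real.log 2 :=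
      div_le_div_of_nonneg_left hlog4 hlog2 hlogy
    have h4 : Real.log 4 / Real.log 2 = 2 := by
      rw [RS.log4]; field_simp
    calc (∑ k ∈ Finset.range (y+1), f k) * g y ≤ 1 + Real.log 4 / Real.log y := by
          rw [← h2]; exact h1
      _ ≤ 1 + 2 := by rw [← h4] at *; linarith
      _ ≤ 3 := by norm_num
  -- termwise bound on the second sum
  have hterm : ∀ n ∈ Finset.Ico 2 y, F n * (g n - g (n+1)) ≤ φ (n+1) - φ n := by
    intro n hn
    obtain ⟨hn2, _⟩ := Finset.mem_Ico.mp hn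
    have hn2' : (2:ℝ) ≤ (n:ℝ) := by exact_mod_cast hn2
    have hgoal : g n - g (n+1) = (Real.log n)⁻¹ - (Real.log ((n:ℝ)+1))⁻¹ := by
      simp only [hg]; norm_num
    have hφgoal : φ (n+1) - φ n
        = (Real.log (Real.log ((n:ℝ)+1)) - Real.log 4 * (Real.log ((n:ℝ)+1))⁻¹)
          - (Real.log (Real.log n) - Real.log 4 * (Real.log n)⁻¹) := by
      simp only [hφ]; norm_num
    rw [hgoal, hφgoal]
    set a := Real.log (n:ℝ) with hadef
    set b := Real.log ((n:ℝ)+1) with hbdef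
    have ha : (0:ℝ) < a := Real.log_pos (by linarith)
    have hb : (0:ℝ) < b := Real.log_pos (by linarith)
    have hab : a ≤ b := Real.log_le_log (by linarith) (by linarith)
    have hΔ : (0:ℝ) ≤ a⁻¹ - b⁻¹ := by
      have : b⁻¹ ≤ a⁻¹ := by gcongr
      linarith
    have hmul : F n * (a⁻¹ - b⁻¹) ≤ (a + Real.log 4) * (a⁻¹ - b⁻¹) :=
      mul_le_mul_of_nonneg_right (hFle n) hΔ
    refine hmul.trans ?_
    have hba : 1 - a/b ≤ Real.log b - Real.log a := by
      have h := RS.one_sub_inv_le_log (show (0:ℝ) < b/a by positivity)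
      rw [Real.log_div (ne_of_gt hb) (ne_of_gt ha)] at h
      have heq : 1 - 1/(b/a) = 1 - a/b := by field_simp
      linarith [heq ▸ h]
    have hexpand : (a + Real.log 4) * (a⁻¹ - b⁻¹) = (1 - a/b) + Real.log 4 * (a⁻¹ - b⁻¹) := by
      field_simp
    rw [hexpand]
    nlinarith [hΔ, hba]
  -- second sum
  have hsecond : ∑ n ∈ Finset.range y, F n * (g n - g (n+1)) ≤ φ y - φ 2 := by
    have hsub : ∑ n ∈ Finset.range y, F n * (g n - g (n+1))
        = ∑ n ∈ Finset.Ico 2 y, F n * (g n - g (n+1)) := by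
      symm
      apply Finset.sum_subset
      · intro n hn
        rw [Finset.mem_range]
        exact (Finset.mem_Ico.mp hn).2
      · intro n hn hnot
        have : n < 2 := by
          rw [Finset.mem_Ico] at hnot
          rw [Finset.mem_range] at hn
          omega
        interval_cases n
        · have : F 0 = 0 := by
            rw [hFdef]; simp [hf, Nat.not_prime_zero]
          rw [this]; ring
        · rw [hF1]; ring
    rw [hsub]
    calc ∑ n ∈ Finset.Ico 2 y, F n * (g n - g (n+1))
        ≤ ∑ n ∈ Finset.Ico 2 y, (φ (n+1) - φ n) := Finset.sum_le_sum hterm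
      _ = φ y - φ 2 := RS.tele φ 2 y hy
  -- final numeric assembly
  have hφ2 : -(φ 2) ≤ 3 := by
    simp only [hφ]
    push_cast
    have h1 : 1 - 1/Real.log 2 ≤ Real.log (Real.log 2) := RS.one_sub_inv_le_log hlog2
    have h2 : Real.log 4 * (Real.log 2)⁻¹ = 2 := by
      rw [RS.log4]; field_simp
    have h3 : 1/Real.log 2 < 2 := by
      rw [div_lt_iff₀ hlog2]; linarith
    linarith
  have hφy : φ y ≤ Real.log (Real.log y) := by
    simp only [hφ]
    have : 0 ≤ Real.log 4 * (Real.log y)⁻¹ := by positivity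
    linarith
  calc (∑ k ∈ Finset.range (y+1), f k) * g y + ∑ n ∈ Finset.range y, F n * (g n - g (n+1))
      ≤ 3 + (φ y - φ 2) := add_le_add hfirst hsecond
    _ ≤ 3 + (Real.log (Real.log y) + 3) := by linarith
    _ = Real.log (Real.log y) + 6 := by ring

lemma RS.ratio_eq (d : ℕ) (hd : 0 < d) :
    (d:ℝ) / (d.totient : ℝ) = ∏ p ∈ d.primeFactors, ((p:ℝ)/((p:ℝ)-1)) := by
  have h := Nat.totient_mul_prod_primeFactors d
  have hcast : ((d.totient * ∏ p ∈ d.primeFactors, p : ℕ) : ℝ)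
      = ((d * ∏ p ∈ d.primeFactors, (p-1) : ℕ) : ℝ) := by rw [h]
  push_cast at hcast
  have hsub : ∀ p ∈ d.primeFactors, (((p-1 : ℕ)):ℝ) = (p:ℝ) - 1 := by
    intro p hp
    have := (Nat.prime_of_mem_primeFactors hp).one_lt
    push_cast [Nat.cast_sub this.le]
    ring
  rw [Finset.prod_congr rfl hsub] at hcast
  have hφ : (0:ℝ) < (d.totient : ℝ) := by exact_mod_cast Nat.totient_pos.mpr hd
  have hprod1 : (0:ℝ) < ∏ p ∈ d.primeFactors, ((p:ℝ) - 1) := by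
    apply Finset.prod_pos
    intro p hp
    have h2 : (2:ℝ) ≤ (p:ℝ) := by exact_mod_cast (Nat.prime_of_mem_primeFactors hp).two_le
    linarith
  rw [Finset.prod_div_distrib, div_eq_div_iff hφ.ne' hprod1.ne']
  linarith [hcast]

lemma RS.log3 : (1.03:ℝ) ≤ Real.log 3 := by
  have h89 : Real.log ((8:ℕ):ℝ) ≤ Real.log ((9:ℕ):ℝ) := by
    apply Real.log_le_log (by norm_num) (by norm_num)
  rw [show ((9:ℕ):ℝ) = 3^2 by norm_num, show ((8:ℕ):ℝ) = 2^3 by norm_num,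
    Real.log_pow, Real.log_pow] at h89
  have := Real.log_two_gt_d9
  push_cast at h89
  nlinarith

lemma RS.exp9 : Real.exp 9 ≤ 10000 := by
  have h : Real.exp 9 = (Real.exp 1)^(9:ℕ) := by
    rw [← Real.exp_nat_mul]; norm_num
  rw [h]
  have h1 : Real.exp 1 ≤ 2.7182818286 := Real.exp_one_lt_d9.le
  calc (Real.exp 1)^(9:ℕ) ≤ (2.7182818286:ℝ)^(9:ℕ) := by
        apply pow_le_pow_left₀ (Real.exp_pos 1).le h1
    _ ≤ 10000 := by norm_num

theorem totient_ratio_le_log_log :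
    ∃ C : ℝ, 0 < C ∧ ∀ d : ℕ, 3 ≤ d →
      (d : ℝ) / (Nat.totient d : ℝ) ≤ C * Real.log (Real.log d) := by
  refine ⟨10000, by norm_num, fun d hd => ?_⟩
  have hd0 : 0 < d := by omega
  have hφpos : (0:ℝ) < (d.totient : ℝ) := by exact_mod_cast Nat.totient_pos.mpr hd0
  -- log log d ≥ 1/40
  have hlogd3 : (1.03:ℝ) ≤ Real.log d := by
    refine RS.log3.trans (Real.log_le_log (by norm_num) ?_)
    exact_mod_cast hd
  have hloglog : (1/40 : ℝ) ≤ Real.log (Real.log d) := by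
    have h := RS.one_sub_inv_le_log (show (0:ℝ) < Real.log d by linarith)
    have : 1 / Real.log d ≤ 1 / 1.03 := by
      apply div_le_div_of_nonneg_left (by norm_num) (by norm_num) hlogd3
    calc (1/40:ℝ) ≤ 1 - 1/1.03 := by norm_num
      _ ≤ 1 - 1/Real.log d := by linarith
      _ ≤ Real.log (Real.log d) := h
  rcases Nat.lt_or_ge d 8 with hsmall | hbig
  · -- small case
    have h7 : (d:ℝ)/(d.totient:ℝ) ≤ 7 := by
      have h1 : (1:ℝ) ≤ (d.totient : ℝ) := by
        exact_mod_cast Nat.totient_pos.mpr hd0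
      calc (d:ℝ)/(d.totient:ℝ) ≤ (d:ℝ)/1 := by
            apply div_le_div_of_nonneg_left (by positivity) (by norm_num) h1
        _ = d := by ring
        _ ≤ 7 := by exact_mod_cast Nat.lt_succ_iff.mp hsmall
    calc (d:ℝ)/(d.totient:ℝ) ≤ 7 := h7
      _ ≤ 10000 * (1/40) := by norm_num
      _ ≤ 10000 * Real.log (Real.log d) := by linarith
  · -- main case
    set y := ⌊Real.log d⌋₊ with hy
    have hlogd2 : (2:ℝ) ≤ Real.log d := by
      have h8 : Real.log ((8:ℕ):ℝ) ≤ Real.log d := by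
        apply Real.log_le_log (by norm_num); exact_mod_cast hbig
      rw [show ((8:ℕ):ℝ) = 2^3 by norm_num, Real.log_pow] at h8
      have := Real.log_two_gt_d9
      push_cast at h8
      nlinarith
    have hy2 : 2 ≤ y := by
      apply Nat.le_floor; exact_mod_cast hlogd2
    have hyR : (2:ℝ) ≤ (y:ℝ) := by exact_mod_cast hy2
    have hyle : (y:ℝ) ≤ Real.log d := Nat.floor_le (by linarith)
    have hylt : Real.log d < (y:ℝ) + 1 := Nat.lt_floor_add_one _
    set P := d.primeFactors with hP
    have hPfacts : ∀ p ∈ P, 2 ≤ p := fun p hp => (Nat.prime_of_mem_primeFactors hp).two_le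
    -- log of ratio
    have hlogratio : Real.log ((d:ℝ)/(d.totient:ℝ)) ≤ ∑ p ∈ P, 1/((p:ℝ)-1) := by
      rw [RS.ratio_eq d hd0, Real.log_prod]
      · apply Finset.sum_le_sum
        intro p hp
        have h2 : (2:ℝ) ≤ (p:ℝ) := by exact_mod_cast hPfacts p hp
        have hx : (0:ℝ) < (p:ℝ)/((p:ℝ)-1) := by
          apply div_pos <;> linarith
        have := Real.log_le_sub_one_of_pos hx
        have h0 : (p:ℝ) - 1 ≠ 0 := by linarith
        have heq : (p:ℝ)/((p:ℝ)-1) - 1 = 1/((p:ℝ)-1) := by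
          field_simp; ring
        linarith [heq ▸ this]
      · intro p hp
        have h2 : (2:ℝ) ≤ (p:ℝ) := by exact_mod_cast hPfacts p hp
        have : (0:ℝ) < (p:ℝ)/((p:ℝ)-1) := by apply div_pos <;> linarith
        exact this.ne'
    -- split the sum
    classical
    have hsplit : ∑ p ∈ P, 1/((p:ℝ)-1)
        = ∑ p ∈ P.filter (· ≤ y), 1/((p:ℝ)-1) + ∑ p ∈ P.filter (fun p => ¬ p ≤ y), 1/((p:ℝ)-1) :=
      (Finset.sum_filter_add_sum_filter_not P _ _).symm
    -- small primes
    set Q := (Finset.range (y+1)).filter Nat.Prime with hQ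
    have hQ2 : ∀ p ∈ Q, (2:ℝ) ≤ (p:ℝ) := by
      intro p hp
      exact_mod_cast (Finset.mem_filter.mp hp).2.two_le
    have hsmall1 : ∑ p ∈ P.filter (· ≤ y), 1/((p:ℝ)-1) ≤ ∑ p ∈ Q, 1/((p:ℝ)-1) := by
      apply Finset.sum_le_sum_of_subset_of_nonneg
      · intro p hp
        obtain ⟨hpP, hpy⟩ := Finset.mem_filter.mp hp
        exact Finset.mem_filter.mpr ⟨Finset.mem_range.mpr (by omega),
          Nat.prime_of_mem_primeFactors hpP⟩
      · intro p hp _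
        have h2 := hQ2 p hp
        have : (0:ℝ) < (p:ℝ) - 1 := by linarith
        positivity
    have hsq : ∑ p ∈ Q, ((p:ℝ)*((p:ℝ)-1))⁻¹ ≤ 1 := by
      have hsub : Q ⊆ Finset.Ico 2 (y+1) := by
        intro p hp
        obtain ⟨hpr, hpp⟩ := Finset.mem_filter.mp hp
        exact Finset.mem_Ico.mpr ⟨hpp.two_le, Finset.mem_range.mp hpr⟩
      have h1 : ∑ p ∈ Q, ((p:ℝ)*((p:ℝ)-1))⁻¹ ≤ ∑ n ∈ Finset.Ico 2 (y+1), ((n:ℝ)*((n:ℝ)-1))⁻¹ := by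
        apply Finset.sum_le_sum_of_subset_of_nonneg hsub
        intro n hn _
        have h2 : (2:ℝ) ≤ (n:ℝ) := by exact_mod_cast (Finset.mem_Ico.mp hn).1
        have : (0:ℝ) < (n:ℝ)*((n:ℝ)-1) := by nlinarith
        positivity
      have h2 : ∑ n ∈ Finset.Ico 2 (y+1), ((n:ℝ)*((n:ℝ)-1))⁻¹
          = ∑ n ∈ Finset.Ico 2 (y+1), ((fun m : ℕ => -(((m:ℝ)-1)⁻¹)) (n+1) - (fun m : ℕ => -(((m:ℝ)-1)⁻¹)) n) := by
        apply Finset.sum_congr rfl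
        intro n hn
        have h2 : (2:ℝ) ≤ (n:ℝ) := by exact_mod_cast (Finset.mem_Ico.mp hn).1
        simp only
        push_cast
        have hn0 : (n:ℝ) ≠ 0 := by linarith
        have hn1 : (n:ℝ) - 1 ≠ 0 := by intro h; rw [sub_eq_zero] at h; rw [h] at h2; norm_num at h2
        field_simp
        try ring
        rw [mul_inv_cancel₀ hn0, pow_two, mul_assoc, mul_inv_cancel₀ hn0]; ring
      refine h1.trans ?_
      rw [h2, RS.tele (fun m : ℕ => -(((m:ℝ)-1)⁻¹)) 2 (y+1) (by omega)]
      have hy0 : (0:ℝ) < (y:ℝ) := by linarith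
      push_cast
      have h4 : (0:ℝ) ≤ ((y:ℝ))⁻¹ := by positivity
      norm_num
      try linarith
    have hsplitQ : ∀ p ∈ Q, 1/((p:ℝ)-1) = (p:ℝ)⁻¹ + ((p:ℝ)*((p:ℝ)-1))⁻¹ := by
      intro p hp
      have h2 := hQ2 p hp
      have hp0 : (p:ℝ) ≠ 0 := by linarith
      have hp1 : (p:ℝ) - 1 ≠ 0 := by intro h; rw [sub_eq_zero] at h; rw [h] at h2; norm_num at h2
      field_simp
      try ring
    have hsmall : ∑ p ∈ P.filter (· ≤ y), 1/((p:ℝ)-1) ≤ Real.log (Real.log y) + 7 := by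
      calc ∑ p ∈ P.filter (· ≤ y), 1/((p:ℝ)-1) ≤ ∑ p ∈ Q, 1/((p:ℝ)-1) := hsmall1
        _ = ∑ p ∈ Q, (p:ℝ)⁻¹ + ∑ p ∈ Q, ((p:ℝ)*((p:ℝ)-1))⁻¹ := by
            rw [← Finset.sum_add_distrib]
            exact Finset.sum_congr rfl hsplitQ
        _ ≤ (Real.log (Real.log y) + 6) + 1 := add_le_add (RS.M2 y hy2) hsq
        _ = Real.log (Real.log y) + 7 := by ring
    -- big primes
    have hbigsum : ∑ p ∈ P.filter (fun p => ¬ p ≤ y), 1/((p:ℝ)-1) ≤ 2 := by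
      set K := P.filter (fun p => ¬ p ≤ y) with hK
      have hKmem : ∀ p ∈ K, y + 1 ≤ p := by
        intro p hp
        have := (Finset.mem_filter.mp hp).2
        omega
      -- cardinality bound
      have hdvd : ∏ p ∈ K, p ∣ d := by
        refine dvd_trans ?_ (Nat.prod_primeFactors_dvd d)
        apply Finset.prod_dvd_prod_of_subset _ _ _ (Finset.filter_subset _ _)
      have hpowle : (y+1)^K.card ≤ d := by
        calc (y+1)^K.card ≤ ∏ p ∈ K, p := Finset.pow_card_le_prod K _ _ hKmem
          _ ≤ d := Nat.le_of_dvd hd0 hdvd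
      have hlogpow : (K.card : ℝ) * Real.log ((y:ℝ)+1) ≤ Real.log d := by
        have h1 : (((y+1)^K.card : ℕ):ℝ) ≤ (d:ℝ) := by exact_mod_cast hpowle
        have h2 := Real.log_le_log (by positivity) h1
        rw [Nat.cast_pow, Real.log_pow] at h2
        push_cast at h2 ⊢
        linarith
      have hlogy1 : (1.03:ℝ) ≤ Real.log ((y:ℝ)+1) := by
        refine RS.log3.trans (Real.log_le_log (by norm_num) (by linarith))
      have hcard : (K.card : ℝ) ≤ 2 * (y:ℝ) := by
        nlinarith [hlogpow, hlogy1, hylt, hyle, hyR]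
      have hterm : ∀ p ∈ K, 1/((p:ℝ)-1) ≤ ((y:ℝ))⁻¹ := by
        intro p hp
        have h1 : (y:ℝ) + 1 ≤ (p:ℝ) := by exact_mod_cast hKmem p hp
        have hy0 : (0:ℝ) < (y:ℝ) := by linarith
        rw [one_div]
        apply inv_anti₀ hy0
        linarith
      calc ∑ p ∈ K, 1/((p:ℝ)-1) ≤ K.card • ((y:ℝ))⁻¹ := Finset.sum_le_card_nsmul K _ _ hterm
        _ = (K.card : ℝ) * ((y:ℝ))⁻¹ := by rw [nsmul_eq_mul]
        _ ≤ 2 * (y:ℝ) * ((y:ℝ))⁻¹ := by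
            apply mul_le_mul_of_nonneg_right hcard (by positivity)
        _ = 2 := by field_simp
    -- combine
    have hlogtotal : Real.log ((d:ℝ)/(d.totient:ℝ)) ≤ Real.log (Real.log y) + 9 := by
      calc Real.log ((d:ℝ)/(d.totient:ℝ)) ≤ ∑ p ∈ P, 1/((p:ℝ)-1) := hlogratio
        _ = _ + _ := hsplit
        _ ≤ (Real.log (Real.log y) + 7) + 2 := add_le_add hsmall hbigsum
        _ = Real.log (Real.log y) + 9 := by ring
    have hratio_pos : (0:ℝ) < (d:ℝ)/(d.totient:ℝ) := by positivity
    have hlogy_pos : (0:ℝ) < Real.log y := Real.log_pos (by linarith)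
    have hfin : (d:ℝ)/(d.totient:ℝ) ≤ Real.exp 9 * Real.log y := by
      calc (d:ℝ)/(d.totient:ℝ) = Real.exp (Real.log ((d:ℝ)/(d.totient:ℝ))) :=
            (Real.exp_log hratio_pos).symm
        _ ≤ Real.exp (Real.log (Real.log y) + 9) := Real.exp_le_exp.mpr hlogtotal
        _ = Real.exp 9 * Real.log y := by
            rw [Real.exp_add, Real.exp_log hlogy_pos]; ring
    have hlogylog : Real.log (y:ℝ) ≤ Real.log (Real.log d) := by
      apply Real.log_le_log (by linarith) hyle
    calc (d:ℝ)/(d.totient:ℝ) ≤ Real.exp 9 * Real.log y := hfin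
      _ ≤ 10000 * Real.log (Real.log d) := by
          apply mul_le_mul RS.exp9 hlogylog hlogy_pos.le (by norm_num)
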